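/- arXiv:1105.2341 — 3 statements merged into one kernel-verified Lean document; each statement's English description precedes it below -/
import Mathlib

section
/- For nonnegative integers b, b', and a, the alternating convolution ∑_{i+j = c, i,j ≥ 0} (-1)^j * binom(i, a) * binom(j, a) equals 0 if c is odd, and equals (-1)^a * binom(d, a) if c = 2d is even. -/
open PowerSeries Finset

noncomputable def Faux (a : ℕ) : PowerSeries ℤ := PowerSeries.mk fun i => (i.choose a : ℤ)
noncomputable def Gaux (a : ℕ) : PowerSeries ℤ := PowerSeries.mk fun j => (-1) ^ j * (j.choose a : ℤ)
noncomputable def Haux (a : ℕ) : PowerSeries ℤ :=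
  PowerSeries.mk fun c => if Odd c then 0 else (-1) ^ a * ((c / 2).choose a : ℤ)

lemma stepF (a : ℕ) : (1 - X) * Faux (a + 1) = X * Faux a := by
  ext n
  cases n with
  | zero => simp [Faux]
  | succ n =>
    simp only [sub_mul, one_mul, map_sub, coeff_succ_X_mul, Faux, coeff_mk,
      Nat.choose_succ_succ]
    push_cast
    ring

lemma baseF : (1 - X) * Faux 0 = 1 := by
  ext n
  cases n with
  | zero => simp [Faux]
  | succ n =>
    simp [sub_mul, Faux, coeff_succ_X_mul, coeff_one]

lemma keyF (a : ℕ) : (1 - X) ^ (a + 1) * Faux a = X ^ a := by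
  induction a with
  | zero => simpa using baseF
  | succ a ih =>
    calc (1 - X) ^ (a + 2) * Faux (a + 1)
        = (1 - X) ^ (a + 1) * ((1 - X) * Faux (a + 1)) := by ring
      _ = (1 - X) ^ (a + 1) * (X * Faux a) := by rw [stepF]
      _ = X * ((1 - X) ^ (a + 1) * Faux a) := by ring
      _ = X ^ (a + 1) := by rw [ih]; ring

lemma stepG (a : ℕ) : (1 + X) * Gaux (a + 1) = -(X * Gaux a) := by
  ext n
  cases n with
  | zero => simp [Gaux]
  | succ n =>
    simp only [add_mul, one_mul, map_add, map_neg, coeff_succ_X_mul, Gaux, coeff_mk,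
      Nat.choose_succ_succ]
    push_cast
    ring

lemma baseG : (1 + X) * Gaux 0 = 1 := by
  ext n
  cases n with
  | zero => simp [Gaux]
  | succ n =>
    simp [add_mul, Gaux, coeff_succ_X_mul, coeff_one, pow_succ]

lemma keyG (a : ℕ) : (1 + X) ^ (a + 1) * Gaux a = (-1) ^ a * X ^ a := by
  induction a with
  | zero => simpa using baseG
  | succ a ih =>
    calc (1 + X) ^ (a + 2) * Gaux (a + 1)
        = (1 + X) ^ (a + 1) * ((1 + X) * Gaux (a + 1)) := by ring
      _ = (1 + X) ^ (a + 1) * (-(X * Gaux a)) := by rw [stepG]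
      _ = -(X * ((1 + X) ^ (a + 1) * Gaux a)) := by ring
      _ = (-1) ^ (a + 1) * X ^ (a + 1) := by rw [ih]; ring

lemma coeff_sq_mul (f : PowerSeries ℤ) (n : ℕ) :
    (coeff (n + 2)) (X ^ 2 * f) = coeff n f := by
  simpa [add_comm] using coeff_X_pow_mul f 2 n

lemma stepH (a : ℕ) : (1 - X ^ 2) * Haux (a + 1) = -(X ^ 2 * Haux a) := by
  ext n
  match n with
  | 0 =>
    simp only [sub_mul, one_mul, map_sub, map_neg, coeff_X_pow_mul', Haux, coeff_mk]
    norm_num [Nat.odd_iff]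
  | 1 =>
    simp only [sub_mul, one_mul, map_sub, map_neg, coeff_X_pow_mul', Haux, coeff_mk]
    norm_num [Nat.odd_iff]
  | (n + 2) =>
    simp only [sub_mul, one_mul, map_sub, map_neg, coeff_sq_mul, Haux, coeff_mk]
    rcases Nat.even_or_odd n with ⟨m, rfl⟩ | hodd
    · have h1 : ¬ Odd (m + m) := by rw [Nat.odd_iff]; omega
      have h2 : ¬ Odd (m + m + 2) := by rw [Nat.odd_iff]; omega
      have e1 : (m + m) / 2 = m := by omega
      have e2 : (m + m + 2) / 2 = m + 1 := by omega
      simp only [if_neg h1, if_neg h2, e1, e2, Nat.choose_succ_succ]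
      push_cast
      ring
    · have h2 : Odd (n + 2) := by rcases hodd with ⟨k, hk⟩; exact ⟨k + 1, by omega⟩
      rw [if_pos hodd, if_pos h2, if_pos hodd]
      simp

lemma baseH : (1 - X ^ 2) * Haux 0 = 1 := by
  ext n
  match n with
  | 0 =>
    simp only [sub_mul, one_mul, map_sub, coeff_X_pow_mul', Haux, coeff_mk, coeff_one]
    norm_num [Nat.odd_iff]
  | 1 =>
    simp only [sub_mul, one_mul, map_sub, coeff_X_pow_mul', Haux, coeff_mk, coeff_one]
    norm_num [Nat.odd_iff]
  | (n + 2) =>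
    simp only [sub_mul, one_mul, map_sub, coeff_sq_mul, Haux, coeff_mk, coeff_one]
    have h2 : Odd (n + 2) ↔ Odd n := by rw [Nat.odd_iff, Nat.odd_iff]; omega
    by_cases ho : Odd n
    · rw [if_pos ho, if_pos (h2.mpr ho)]
      simp
    · rw [if_neg ho, if_neg (fun h => ho (h2.mp h))]
      simp

lemma keyH (a : ℕ) : (1 - X ^ 2) ^ (a + 1) * Haux a = (-1) ^ a * X ^ (2 * a) := by
  induction a with
  | zero => simpa using baseH
  | succ a ih =>
    calc (1 - X ^ 2) ^ (a + 2) * Haux (a + 1)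
        = (1 - X ^ 2) ^ (a + 1) * ((1 - X ^ 2) * Haux (a + 1)) := by ring
      _ = (1 - X ^ 2) ^ (a + 1) * (-(X ^ 2 * Haux a)) := by rw [stepH]
      _ = -(X ^ 2 * ((1 - X ^ 2) ^ (a + 1) * Haux a)) := by ring
      _ = (-1) ^ (a + 1) * X ^ (2 * (a + 1)) := by rw [ih]; ring

lemma FG_eq_H (a : ℕ) : Faux a * Gaux a = Haux a := by
  have hne : ((1 - X ^ 2 : PowerSeries ℤ)) ^ (a + 1) ≠ 0 := by
    apply pow_ne_zero
    intro h
    have := congrArg (constantCoeff (R := ℤ)) h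
    simp at this
  apply mul_left_cancel₀ hne
  have hfac : ((1 : PowerSeries ℤ) - X ^ 2) = (1 - X) * (1 + X) := by ring
  calc (1 - X ^ 2) ^ (a + 1) * (Faux a * Gaux a)
      = ((1 - X) ^ (a + 1) * Faux a) * ((1 + X) ^ (a + 1) * Gaux a) := by
        rw [hfac, mul_pow]; ring
    _ = X ^ a * ((-1) ^ a * X ^ a) := by rw [keyF, keyG]
    _ = (-1) ^ a * X ^ (2 * a) := by ring
    _ = (1 - X ^ 2) ^ (a + 1) * Haux a := (keyH a).symm

/-- The alternating convolution `∑_{i+j=c} (-1)^j C(i,a) C(j,a)` is `0` for odd `c`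
and `(-1)^a C(d,a)` for `c = 2d`. -/
theorem stmt1 (c a : ℕ) :
    (∑ p ∈ Finset.HasAntidiagonal.antidiagonal c,
        (-1 : ℤ) ^ p.2 * (p.1.choose a : ℤ) * (p.2.choose a : ℤ))
      = if Odd c then 0 else (-1) ^ a * ((c / 2).choose a : ℤ) := by
  have h := congrArg (coeff c) (FG_eq_H a)
  rw [coeff_mul] at h
  simp only [Faux, Gaux, Haux, coeff_mk] at h
  rw [← h]
  apply Finset.sum_congr rfl
  intro p _
  ring
end

section
/- In the group algebra ℂ[S_m] of the symmetric group, the element H = (1/m!) ∏_{1≤i<j≤m} (1 + s_{ij}/(j-i)), where s_{ij} is the transposition (i j) and the product is taken in lexicographic order on pairs (i,j), equals the full symmetrizer (1/m!) ∑_{σ ∈ S_m} σ. -/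
open MonoidAlgebra

noncomputable section JucysAux

variable (m : ℕ)

/-- permutations fixing all indices `< a` -/
def fixSet (a : ℕ) : Finset (Equiv.Perm (Fin m)) :=
  Finset.univ.filter (fun σ => ∀ i : Fin m, (i : ℕ) < a → σ i = i)

lemma mem_fixSet {a : ℕ} {σ : Equiv.Perm (Fin m)} :
    σ ∈ fixSet m a ↔ ∀ i : Fin m, (i : ℕ) < a → σ i = i := by
  simp [fixSet]

def Ee (a : ℕ) : MonoidAlgebra ℂ (Equiv.Perm (Fin m)) :=
  ∑ σ ∈ fixSet m a, MonoidAlgebra.of ℂ _ σ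

def Dd (a : Fin m) (t : ℕ) : MonoidAlgebra ℂ (Equiv.Perm (Fin m)) :=
  ∑ σ ∈ (fixSet m (a : ℕ)).filter (fun σ => t ≤ ((σ a : Fin m) : ℕ)),
    MonoidAlgebra.of ℂ _ σ

def Cc (a t : Fin m) : MonoidAlgebra ℂ (Equiv.Perm (Fin m)) :=
  ∑ σ ∈ (fixSet m (a : ℕ)).filter (fun σ => σ a = t), MonoidAlgebra.of ℂ _ σ

lemma le_apply_of_mem_fixSet {a : Fin m} {σ : Equiv.Perm (Fin m)}
    (h : σ ∈ fixSet m (a : ℕ)) : (a : ℕ) ≤ ((σ a : Fin m) : ℕ) := by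
  by_contra hlt
  push_neg at hlt
  have h1 : σ (σ a) = σ a := (mem_fixSet m).1 h _ hlt
  have h2 := σ.injective h1
  rw [h2] at hlt
  exact lt_irrefl _ hlt

lemma swap_mul_Ee {a t : Fin m} (h : a < t) :
    MonoidAlgebra.of ℂ (Equiv.Perm (Fin m)) (Equiv.swap a t) * Ee m ((a : ℕ) + 1)
      = Cc m a t := by
  rw [Ee, Cc, Finset.mul_sum]
  refine Finset.sum_nbij' (fun σ => Equiv.swap a t * σ) (fun τ => Equiv.swap a t * τ)
    ?_ ?_ ?_ ?_ ?_
  · intro σ hσ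
    rw [mem_fixSet] at hσ
    rw [Finset.mem_filter]
    constructor
    · rw [mem_fixSet]
      intro i hi
      have hia : i ≠ a := Fin.ne_of_lt (by exact Fin.lt_def.2 (by omega))
      have hit : i ≠ t := Fin.ne_of_lt (lt_trans (Fin.lt_def.2 (by omega)) h)
      rw [Equiv.Perm.mul_apply, hσ i (by omega), Equiv.swap_apply_of_ne_of_ne hia hit]
    · have haa : σ a = a := hσ a (by omega)
      rw [Equiv.Perm.mul_apply, haa, Equiv.swap_apply_left]
  · intro τ hτ
    rw [Finset.mem_filter, mem_fixSet] at hτ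
    rw [mem_fixSet]
    intro i hi
    rcases Nat.lt_or_ge (i : ℕ) (a : ℕ) with hia | hia
    · have hia' : i ≠ a := Fin.ne_of_lt (Fin.lt_def.2 hia)
      have hit : i ≠ t := Fin.ne_of_lt (lt_trans (Fin.lt_def.2 hia) h)
      rw [Equiv.Perm.mul_apply, hτ.1 i hia, Equiv.swap_apply_of_ne_of_ne hia' hit]
    · have hia' : i = a := Fin.ext (by omega)
      subst hia'
      rw [Equiv.Perm.mul_apply, hτ.2, Equiv.swap_apply_right]
  · intro σ _; rw [← mul_assoc, Equiv.swap_mul_self, one_mul]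
  · intro τ _; rw [← mul_assoc, Equiv.swap_mul_self, one_mul]
  · intro σ _; rw [map_mul]

lemma swap_mul_Dd {a t' : Fin m} {t : ℕ} (h1 : a < t') (h2 : (t' : ℕ) < t) :
    MonoidAlgebra.of ℂ (Equiv.Perm (Fin m)) (Equiv.swap a t') * Dd m a t = Dd m a t := by
  rw [Dd, Finset.mul_sum]
  refine Finset.sum_nbij' (fun σ => Equiv.swap a t' * σ) (fun τ => Equiv.swap a t' * τ)
    ?_ ?_ ?_ ?_ ?_
  case' refine_1 => intro σ hσ
  case' refine_2 => intro σ hσ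
  case refine_1 | refine_2 =>
    rw [Finset.mem_filter, mem_fixSet] at hσ
    rw [Finset.mem_filter, mem_fixSet]
    have hkey : (Equiv.swap a t' * σ) a = σ a := by
      have hne1 : σ a ≠ a := by
        intro hc; rw [hc] at hσ; have := hσ.2; omega
      have hne2 : σ a ≠ t' := by
        intro hc; rw [hc] at hσ; have := hσ.2; omega
      rw [Equiv.Perm.mul_apply, Equiv.swap_apply_of_ne_of_ne hne1 hne2]
    refine ⟨?_, by rw [hkey]; exact hσ.2⟩
    intro i hi
    have hia : i ≠ a := Fin.ne_of_lt (Fin.lt_def.2 (by omega))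
    have hit : i ≠ t' := Fin.ne_of_lt (lt_trans (Fin.lt_def.2 (by omega)) h1)
    rw [Equiv.Perm.mul_apply, hσ.1 i hi, Equiv.swap_apply_of_ne_of_ne hia hit]
  · intro σ _; rw [← mul_assoc, Equiv.swap_mul_self, one_mul]
  · intro τ _; rw [← mul_assoc, Equiv.swap_mul_self, one_mul]
  · intro σ _; rw [map_mul]

lemma Ee_top : Ee m m = 1 := by
  have h : fixSet m m = {1} := by
    ext σ
    rw [mem_fixSet, Finset.mem_singleton]
    constructor
    · intro h
      ext i
      exact congrArg Fin.val (h i i.isLt)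
    · intro h i _
      rw [h]; rfl
  rw [Ee, h, Finset.sum_singleton, map_one]

lemma Dd_top (a : Fin m) : Dd m a m = 0 := by
  rw [Dd]
  convert Finset.sum_empty
  rw [Finset.filter_eq_empty_iff]
  intro σ _
  have := (σ a).isLt
  omega

lemma Ee_split (a : Fin m) : Ee m (a : ℕ) = Ee m ((a : ℕ) + 1) + Dd m a ((a : ℕ) + 1) := by
  rw [Ee, Ee, Dd, ← Finset.sum_filter_add_sum_filter_not (fixSet m (a : ℕ)) (fun σ => σ a = a)]
  congr 1
  · apply Finset.sum_congr _ (fun _ _ => rfl)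
    ext σ
    rw [Finset.mem_filter, mem_fixSet, mem_fixSet]
    constructor
    · rintro ⟨h1, h2⟩ i hi
      rcases Nat.lt_or_ge (i : ℕ) (a : ℕ) with hia | hia
      · exact h1 i hia
      · have : i = a := Fin.ext (by omega)
        rw [this, h2]
    · intro h
      exact ⟨fun i hi => h i (by omega), h a (by omega)⟩
  · apply Finset.sum_congr _ (fun _ _ => rfl)
    apply Finset.filter_congr
    intro σ hσ
    have hle := le_apply_of_mem_fixSet m hσ
    simp only [eq_iff_iff, ← Fin.val_eq_val]
    omega

lemma Dd_split (a : Fin m) (t : Fin m) (_h : a < t) :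
    Dd m a (t : ℕ) = Cc m a t + Dd m a ((t : ℕ) + 1) := by
  rw [Dd, Cc, Dd,
    ← Finset.sum_filter_add_sum_filter_not ((fixSet m (a : ℕ)).filter
      (fun σ => (t : ℕ) ≤ ((σ a : Fin m) : ℕ))) (fun σ => σ a = t)]
  congr 1
  · apply Finset.sum_congr _ (fun _ _ => rfl)
    rw [Finset.filter_filter]
    apply Finset.filter_congr
    intro σ hσ
    simp only [eq_iff_iff, ← Fin.val_eq_val]
    omega
  · apply Finset.sum_congr _ (fun _ _ => rfl)
    rw [Finset.filter_filter]
    apply Finset.filter_congr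
    intro σ hσ
    simp only [eq_iff_iff, ← Fin.val_eq_val]
    omega

lemma inner_prod (a : Fin m) : ∀ (n t : ℕ), (a : ℕ) < t → t + n = m →
    ((((List.finRange m).drop t).map (fun j : Fin m =>
      (1 : MonoidAlgebra ℂ (Equiv.Perm (Fin m))) +
        (((j : ℕ) : ℂ) - ((a : ℕ) : ℂ))⁻¹ •
          MonoidAlgebra.of ℂ (Equiv.Perm (Fin m)) (Equiv.swap a j))).prod)
      * Ee m ((a : ℕ) + 1)
    = Ee m ((a : ℕ) + 1) + (((t - (a : ℕ) : ℕ) : ℂ))⁻¹ • Dd m a t := by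
  intro n
  induction n with
  | zero =>
    intro t ht htm
    have hd : (List.finRange m).drop t = [] :=
      List.drop_eq_nil_of_le (by rw [List.length_finRange]; omega)
    rw [hd, List.map_nil, List.prod_nil, one_mul, (by omega : t = m), Dd_top,
      smul_zero, add_zero]
  | succ n ih =>
    intro t ht htm
    have htm' : t < m := by omega
    obtain ⟨t', ht'⟩ : ∃ t' : Fin m, (t' : ℕ) = t := ⟨⟨t, htm'⟩, rfl⟩
    have hgt : t < (List.finRange m).length := by rw [List.length_finRange]; omega
    have hget : GetElem.getElem (List.finRange m) t hgt = t' := by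
      rw [List.getElem_finRange]
      exact Fin.ext (by simp [ht'])
    rw [List.drop_eq_getElem_cons hgt, hget, List.map_cons, List.prod_cons, mul_assoc,
      ih (t + 1) (by omega) (by omega)]
    have hat' : a < t' := Fin.lt_def.2 (by omega)
    have hsE := swap_mul_Ee m hat'
    have hsD := swap_mul_Dd m hat' (by omega : (t' : ℕ) < t + 1)
    rw [add_mul, one_mul, smul_mul_assoc, mul_add, mul_smul_comm, hsE, hsD]
    have hsplit : Dd m a t = Cc m a t' + Dd m a (t + 1) := by
      have h2 := Dd_split m a t' hat'
      rw [ht'] at h2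
      exact h2
    have hc : (((t' : ℕ) : ℂ) - ((a : ℕ) : ℂ)) = ((t - (a : ℕ) : ℕ) : ℂ) := by
      rw [ht']
      push_cast [Nat.cast_sub (le_of_lt ht)]
      ring
    rw [hc]
    have hne : ((t - (a : ℕ) : ℕ) : ℂ) ≠ 0 := by
      have h3 : (0:ℕ) < t - (a : ℕ) := by omega
      exact_mod_cast h3.ne'
    have hstep : ((t + 1 - (a : ℕ) : ℕ) : ℂ) = ((t - (a : ℕ) : ℕ) : ℂ) + 1 := by
      push_cast [Nat.cast_sub (by omega : (a:ℕ) ≤ t + 1), Nat.cast_sub (le_of_lt ht)]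
      ring
    have hone : ((t - (a : ℕ) : ℕ) : ℂ) + 1 ≠ 0 := by
      rw [← hstep]
      have h3 : (0:ℕ) < t + 1 - (a : ℕ) := by omega
      exact_mod_cast h3.ne'
    have harith : ((t + 1 - (a : ℕ) : ℕ) : ℂ)⁻¹
        + ((t - (a : ℕ) : ℕ) : ℂ)⁻¹ * ((t + 1 - (a : ℕ) : ℕ) : ℂ)⁻¹
        = ((t - (a : ℕ) : ℕ) : ℂ)⁻¹ := by
      rw [hstep]
      field_simp
    have hDco : ((t + 1 - (a : ℕ) : ℕ) : ℂ)⁻¹ • Dd m a (t + 1)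
        + (((t - (a : ℕ) : ℕ) : ℂ)⁻¹ * ((t + 1 - (a : ℕ) : ℕ) : ℂ)⁻¹) • Dd m a (t + 1)
        = ((t - (a : ℕ) : ℕ) : ℂ)⁻¹ • Dd m a (t + 1) := by
      rw [← add_smul, harith]
    rw [hsplit, smul_add, smul_smul, smul_add, ← hDco]
    abel

lemma filter_eq_drop (a : Fin m) :
    (List.finRange m).filter (fun j : Fin m => decide (a < j))
      = (List.finRange m).drop ((a : ℕ) + 1) := by
  conv_lhs => rw [← List.take_append_drop ((a : ℕ) + 1) (List.finRange m)]
  rw [List.filter_append]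
  have h1 : (List.take ((a : ℕ) + 1) (List.finRange m)).filter
      (fun j : Fin m => decide (a < j)) = [] := by
    rw [List.filter_eq_nil_iff]
    intro x hx
    rw [List.mem_iff_getElem] at hx
    obtain ⟨i, hi, hix⟩ := hx
    rw [List.getElem_take, List.getElem_finRange] at hix
    have hlen : i < (List.take ((a:ℕ)+1) (List.finRange m)).length := hi
    rw [List.length_take, List.length_finRange] at hlen
    have hx : (x : ℕ) = i := by rw [← hix]; simp
    simp only [decide_eq_true_eq, Fin.lt_def]
    omega
  have h2 : (List.drop ((a : ℕ) + 1) (List.finRange m)).filter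
      (fun j : Fin m => decide (a < j)) = List.drop ((a : ℕ) + 1) (List.finRange m) := by
    rw [List.filter_eq_self]
    intro x hx
    rw [List.mem_iff_getElem] at hx
    obtain ⟨i, hi, hix⟩ := hx
    rw [List.getElem_drop, List.getElem_finRange] at hix
    have hx : (x : ℕ) = (a : ℕ) + 1 + i := by rw [← hix]; simp
    simp only [decide_eq_true_eq, Fin.lt_def]
    omega
  rw [h1, h2, List.nil_append]

lemma outer_prod : ∀ (n a : ℕ), a + n = m →
    (((List.finRange m).drop a).flatMap fun (i : Fin m) =>
      ((List.finRange m).filter fun (j : Fin m) => decide (i < j)).map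
        fun (j : Fin m) =>
        ((1 : MonoidAlgebra ℂ (Equiv.Perm (Fin m))) +
          (((j : ℕ) : ℂ) - ((i : ℕ) : ℂ))⁻¹ •
            MonoidAlgebra.of ℂ (Equiv.Perm (Fin m)) (Equiv.swap i j))).prod
    = Ee m a := by
  intro n
  induction n with
  | zero =>
    intro a ham
    have hd : (List.finRange m).drop a = [] :=
      List.drop_eq_nil_of_le (by simp [List.length_finRange]; omega)
    rw [hd, List.flatMap_nil, List.prod_nil, (by omega : a = m), Ee_top]
  | succ n ih =>
    intro a ham
    have ham' : a < m := by omega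
    obtain ⟨a', ha'⟩ : ∃ a' : Fin m, (a' : ℕ) = a := ⟨⟨a, ham'⟩, rfl⟩
    have hgt : a < (List.finRange m).length := by rw [List.length_finRange]; omega
    have hget : GetElem.getElem (List.finRange m) a hgt = a' := by
      rw [List.getElem_finRange]
      exact Fin.ext (by simp [ha'])
    rw [List.drop_eq_getElem_cons hgt, hget, List.flatMap_cons, List.prod_append,
      ih (a + 1) (by omega), ← ha', filter_eq_drop,
      inner_prod m a' n ((a' : ℕ) + 1) (by omega) (by omega)]
    have h1 : (((a' : ℕ) + 1 - (a' : ℕ) : ℕ) : ℂ)⁻¹ = 1 := by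
      norm_num
    rw [h1, one_smul, ← Ee_split]

lemma Ee_zero : Ee m 0 = ∑ σ : Equiv.Perm (Fin m), MonoidAlgebra.of ℂ _ σ := by
  rw [Ee, fixSet, Finset.filter_true_of_mem (fun σ _ => fun i hi => absurd hi (by omega))]

end JucysAux

/-- Jucys' multiplicative formula: in ℂ[S_m],
`(1/m!) ∏_{i<j, lex order} (1 + s_{ij}/(j-i)) = (1/m!) ∑_{σ∈S_m} σ`. -/
theorem stmt2 (m : ℕ) :
    ((m.factorial : ℂ)⁻¹ •
      (((List.finRange m).flatMap fun (i : Fin m) =>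
          ((List.finRange m).filter fun (j : Fin m) => decide (i < j)).map
            fun (j : Fin m) =>
            ((1 : MonoidAlgebra ℂ (Equiv.Perm (Fin m))) +
              (((j : ℕ) : ℂ) - ((i : ℕ) : ℂ))⁻¹ •
                MonoidAlgebra.of ℂ (Equiv.Perm (Fin m)) (Equiv.swap i j))).prod))
      = (m.factorial : ℂ)⁻¹ • ∑ σ : Equiv.Perm (Fin m),
          MonoidAlgebra.of ℂ (Equiv.Perm (Fin m)) σ := by
  have h0 := outer_prod m m 0 (by omega)
  rw [List.drop_zero] at h0
  rw [h0, Ee_zero]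
end

section
/- Let o_{2n} be the orthogonal Lie algebra with standard generators F_{ij} = E_{ij} − E_{ji} (form G = identity), realized inside the affine Lie algebra at the critical level K = −(2n−2). Then in the vacuum module V_{−h∨}(o_{2n}), the noncommutative Pfaffian Pf F[−1] = (1/(2^n n!)) ∑_{σ ∈ S_{2n}} sgn(σ) F_{σ(1)σ(2)}[−1] ⋯ F_{σ(2n−1)σ(2n)}[−1] is annihilated by F_{ij}[0] for all i,j. -/
namespace Stmt13Aux

variable {V : Type*} [AddCommGroup V] [Module ℂ V] {α : Type*}

def prodA (A : α → Module.End ℂ V) (l : List α) : Module.End ℂ V := (l.map A).prod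

@[simp] lemma prodA_nil (A : α → Module.End ℂ V) : prodA A [] = 1 := rfl
@[simp] lemma prodA_cons (A : α → Module.End ℂ V) (a : α) (l : List α) :
    prodA A (a :: l) = A a * prodA A l := by simp [prodA]

lemma prodA_congr {A B : α → Module.End ℂ V} {l : List α} (h : ∀ x ∈ l, A x = B x) :
    prodA A l = prodA B l := by
  unfold prodA; rw [List.map_congr_left h]

def derA (A D : α → Module.End ℂ V) : List α → Module.End ℂ V
  | [] => 0
  | a :: l => D a * prodA A l + A a * derA A D l

lemma comm_prodA (X : Module.End ℂ V) (A D : α → Module.End ℂ V)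
    (h : ∀ a, X * A a = A a * X + D a) :
    ∀ l, X * prodA A l = prodA A l * X + derA A D l
  | [] => by simp [derA]
  | a :: l => by
    have ih := comm_prodA X A D h l
    simp only [prodA_cons, derA]
    calc X * (A a * prodA A l) = (A a * X + D a) * prodA A l := by rw [← mul_assoc, h a]
      _ = A a * (X * prodA A l) + D a * prodA A l := by noncomm_ring
      _ = A a * (prodA A l * X + derA A D l) + D a * prodA A l := by rw [ih]
      _ = A a * prodA A l * X + (D a * prodA A l + A a * derA A D l) := by noncomm_ring

/-! positions -/

def ee (n : ℕ) (k : Fin n) : Fin (2*n) := ⟨2*(k:ℕ), by have := k.isLt; linarith⟩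
def oo (n : ℕ) (k : Fin n) : Fin (2*n) := ⟨2*(k:ℕ)+1, by have := k.isLt; linarith⟩

lemma ee_ne_ee {n : ℕ} {k m : Fin n} (h : k ≠ m) : ee n k ≠ ee n m := by
  simp only [ee, Ne, Fin.mk.injEq]
  intro hc; exact h (Fin.ext (by omega))

lemma oo_ne_oo {n : ℕ} {k m : Fin n} (h : k ≠ m) : oo n k ≠ oo n m := by
  simp only [oo, Ne, Fin.mk.injEq]
  intro hc; exact h (Fin.ext (by omega))

lemma oo_ne_ee {n : ℕ} (k m : Fin n) : oo n k ≠ ee n m := by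
  simp only [oo, ee, Ne, Fin.mk.injEq]; omega

section Main

variable (n : ℕ) (Fo : Fin (2*n) → Fin (2*n) → ℤ → Module.End ℂ V) (i j : Fin (2*n))

def Afun (f : Fin (2*n) → Fin (2*n)) (k : Fin n) : Module.End ℂ V :=
  Fo (f (ee n k)) (f (oo n k)) (-1)

def Dfun (a b : Fin (2*n)) : Module.End ℂ V :=
  (if a = j then Fo i b (-1) else 0) - (if i = b then Fo a j (-1) else 0)
    - (if a = i then Fo j b (-1) else 0) + (if j = b then Fo a i (-1) else 0)

/-- the four replacement terms at pair `k`, with products over list `l` -/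
def repl (f : Fin (2*n) → Fin (2*n)) (l : List (Fin n)) (k : Fin n) : Module.End ℂ V :=
  (if f (ee n k) = j then prodA (Afun n Fo (Function.update f (ee n k) i)) l else 0)
  - (if i = f (oo n k) then prodA (Afun n Fo (Function.update f (oo n k) j)) l else 0)
  - (if f (ee n k) = i then prodA (Afun n Fo (Function.update f (ee n k) j)) l else 0)
  + (if j = f (oo n k) then prodA (Afun n Fo (Function.update f (oo n k) i)) l else 0)

lemma Afun_update_ee (f : Fin (2*n) → Fin (2*n)) (x : Fin (2*n)) {k m : Fin n} (h : k ≠ m) :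
    Afun n Fo (Function.update f (ee n m) x) k = Afun n Fo f k := by
  unfold Afun
  rw [Function.update_of_ne (ee_ne_ee h), Function.update_of_ne (oo_ne_ee k m)]

lemma Afun_update_oo (f : Fin (2*n) → Fin (2*n)) (x : Fin (2*n)) {k m : Fin n} (h : k ≠ m) :
    Afun n Fo (Function.update f (oo n m) x) k = Afun n Fo f k := by
  unfold Afun
  rw [Function.update_of_ne (oo_ne_ee m k).symm, Function.update_of_ne (oo_ne_oo h)]

end Main

end Stmt13Aux

namespace Stmt13Aux
section Main2
variable {V : Type*} [AddCommGroup V] [Module ℂ V]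
variable (n : ℕ) (Fo : Fin (2*n) → Fin (2*n) → ℤ → Module.End ℂ V) (i j : Fin (2*n))

lemma derA_sum (f : Fin (2*n) → Fin (2*n)) :
    ∀ l : List (Fin n), l.Nodup →
      derA (Afun n Fo f) (fun k => Dfun n Fo i j (f (ee n k)) (f (oo n k))) l
        = ∑ k ∈ l.toFinset, repl n Fo i j f l k
  | [], _ => by simp [derA]
  | a :: l, hnd => by
    have ha : a ∉ l := (List.nodup_cons.mp hnd).1
    have ih := derA_sum f l (List.nodup_cons.mp hnd).2
    have ha' : a ∉ l.toFinset := by simpa using ha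
    rw [List.toFinset_cons, Finset.sum_insert ha']
    have claim1 : repl n Fo i j f (a :: l) a
        = Dfun n Fo i j (f (ee n a)) (f (oo n a)) * prodA (Afun n Fo f) l := by
      have hco : ∀ (x : Fin (2*n)) (p : Fin (2*n)),
          prodA (Afun n Fo (Function.update f p x)) l = prodA (Afun n Fo f) l → True := fun _ _ _ => trivial
      have h1 : ∀ x : Fin (2*n),
          prodA (Afun n Fo (Function.update f (ee n a) x)) l = prodA (Afun n Fo f) l := by
        intro x
        exact prodA_congr fun k hk => Afun_update_ee n Fo f x (fun h => ha (h ▸ hk))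
      have h2 : ∀ x : Fin (2*n),
          prodA (Afun n Fo (Function.update f (oo n a) x)) l = prodA (Afun n Fo f) l := by
        intro x
        exact prodA_congr fun k hk => Afun_update_oo n Fo f x (fun h => ha (h ▸ hk))
      have e1 : ∀ x : Fin (2*n),
          Afun n Fo (Function.update f (ee n a) x) a = Fo x (f (oo n a)) (-1) := by
        intro x
        unfold Afun
        rw [Function.update_self, Function.update_of_ne (oo_ne_ee a a)]
      have e2 : ∀ x : Fin (2*n),
          Afun n Fo (Function.update f (oo n a) x) a = Fo (f (ee n a)) x (-1) := by
        intro x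
        unfold Afun
        rw [Function.update_self, Function.update_of_ne (oo_ne_ee a a).symm]
      simp only [repl, prodA_cons, h1, h2, e1, e2, Dfun, sub_mul, add_mul, ite_mul, zero_mul]
    have claim2 : ∀ k ∈ l.toFinset, repl n Fo i j f (a :: l) k = Afun n Fo f a * repl n Fo i j f l k := by
      intro k hk
      have hka : a ≠ k := fun h => ha' (h ▸ hk)
      have g1 : ∀ x : Fin (2*n),
          Afun n Fo (Function.update f (ee n k) x) a = Afun n Fo f a :=
        fun x => Afun_update_ee n Fo f x hka
      have g2 : ∀ x : Fin (2*n),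
          Afun n Fo (Function.update f (oo n k) x) a = Afun n Fo f a :=
        fun x => Afun_update_oo n Fo f x hka
      simp only [repl, prodA_cons, g1, g2, mul_sub, mul_add, mul_ite, mul_zero]
    rw [Finset.sum_congr rfl claim2, claim1, derA, ih, Finset.mul_sum]

def eoEquiv (n : ℕ) : Fin n × Fin 2 ≃ Fin (2*n) where
  toFun x := ⟨2*(x.1:ℕ) + (x.2:ℕ), by have := x.1.isLt; have := x.2.isLt; omega⟩
  invFun p := (⟨(p:ℕ)/2, by have := p.isLt; omega⟩, ⟨(p:ℕ)%2, by omega⟩)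
  left_inv x := by
    have h2 := x.2.isLt
    refine Prod.ext (Fin.ext ?_) (Fin.ext ?_)
    · show (2*(x.1:ℕ) + (x.2:ℕ)) / 2 = (x.1:ℕ); omega
    · show (2*(x.1:ℕ) + (x.2:ℕ)) % 2 = (x.2:ℕ); omega
  right_inv p := by
    refine Fin.ext ?_
    show 2*((p:ℕ)/2) + (p:ℕ)%2 = (p:ℕ); omega

lemma sum_eo {M : Type*} [AddCommMonoid M] (n : ℕ) (g : Fin (2*n) → M) :
    ∑ p : Fin (2*n), g p = ∑ k : Fin n, (g (ee n k) + g (oo n k)) := by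
  rw [← Fintype.sum_equiv (eoEquiv n) (fun x => g (eoEquiv n x)) g (fun x => rfl)]
  rw [Fintype.sum_prod_type]
  refine Finset.sum_congr rfl fun k _ => ?_
  rw [Fin.sum_univ_two]
  have h0 : eoEquiv n (k, 0) = ee n k := Fin.ext (by simp [eoEquiv, ee])
  have h1 : eoEquiv n (k, 1) = oo n k := Fin.ext (by simp [eoEquiv, oo])
  rw [h0, h1]

end Main2
end Stmt13Aux

namespace Stmt13Aux
section Main3
variable {V : Type*} [AddCommGroup V] [Module ℂ V]
variable (n : ℕ) (Fo : Fin (2*n) → Fin (2*n) → ℤ → Module.End ℂ V) (i j : Fin (2*n)) (K : ℂ)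

lemma comm1
    (hcomm : ∀ i j k l : Fin (2*n), ∀ r s : ℤ,
      Fo i j r * Fo k l s - Fo k l s * Fo i j r =
        (if k = j then Fo i l (r+s) else 0) - (if i = l then Fo k j (r+s) else 0)
        - (if k = i then Fo j l (r+s) else 0) + (if j = l then Fo k i (r+s) else 0)
        + (if r + s = 0 then
            ((r : ℂ) * (((if k = j ∧ i = l then 1 else 0)
              - (if k = i ∧ j = l then (1:ℂ) else 0)) * K)) • 1 else 0))
    (a b : Fin (2*n)) :
    Fo i j 0 * Fo a b (-1) = Fo a b (-1) * Fo i j 0 + Dfun n Fo i j a b := by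
  have h := hcomm i j a b 0 (-1)
  norm_num at h
  rw [sub_eq_iff_eq_add] at h
  rw [h, Dfun]
  abel

lemma Xpr
    (hcomm : ∀ i j k l : Fin (2*n), ∀ r s : ℤ,
      Fo i j r * Fo k l s - Fo k l s * Fo i j r =
        (if k = j then Fo i l (r+s) else 0) - (if i = l then Fo k j (r+s) else 0)
        - (if k = i then Fo j l (r+s) else 0) + (if j = l then Fo k i (r+s) else 0)
        + (if r + s = 0 then
            ((r : ℂ) * (((if k = j ∧ i = l then 1 else 0)
              - (if k = i ∧ j = l then (1:ℂ) else 0)) * K)) • 1 else 0))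
    (vac : V) (hvac0 : Fo i j 0 vac = 0) (f : Fin (2*n) → Fin (2*n)) :
    Fo i j 0 (prodA (Afun n Fo f) (List.finRange n) vac)
      = ∑ k : Fin n, (repl n Fo i j f (List.finRange n) k) vac := by
  have hc := comm_prodA (Fo i j 0) (Afun n Fo f)
    (fun k => Dfun n Fo i j (f (ee n k)) (f (oo n k)))
    (fun k => comm1 n Fo i j K hcomm (f (ee n k)) (f (oo n k))) (List.finRange n)
  rw [derA_sum n Fo i j f (List.finRange n) (List.nodup_finRange n),
    List.toFinset_finRange] at hc
  have happ := congrArg (fun (E : Module.End ℂ V) => E vac) hc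
  simp only [Module.End.mul_apply, LinearMap.add_apply, LinearMap.sum_apply] at happ
  rw [hvac0, map_zero, zero_add] at happ
  exact happ

lemma cancel (vac : V) (x y : Fin (2*n)) (hxy : x ≠ y) :
    ∑ σ : Equiv.Perm (Fin (2*n)), ∑ p : Fin (2*n),
      ((Equiv.Perm.sign σ : ℤ) : ℂ) •
        (if σ p = y then
          (prodA (Afun n Fo (Function.update (⇑σ) p x)) (List.finRange n)) vac
        else 0) = 0 := by
  rw [← Finset.sum_product' Finset.univ Finset.univ (fun σ p =>
      ((Equiv.Perm.sign σ : ℤ) : ℂ) •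
        (if σ p = y then
          (prodA (Afun n Fo (Function.update (⇑σ) p x)) (List.finRange n)) vac
        else 0)), Finset.univ_product_univ]
  apply Finset.sum_ninvolution
    (g := fun sp => (sp.1 * Equiv.swap sp.2 (sp.1⁻¹ x), sp.1⁻¹ x))
  · rintro ⟨σ, p⟩
    set q := σ⁻¹ x with hq
    by_cases hpy : σ p = y
    · have hqx : σ q = x := σ.apply_symm_apply x
      have hqp : q ≠ p := fun h => hxy (by rw [← hqx, h, hpy])
      have h1 : (σ * Equiv.swap p q) q = y := by
        simp [Equiv.Perm.mul_apply, Equiv.swap_apply_right, hpy]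
      have hsgn : ((Equiv.Perm.sign (σ * Equiv.swap p q) : ℤ) : ℂ)
          = -((Equiv.Perm.sign σ : ℤ) : ℂ) := by
        rw [Equiv.Perm.sign_mul, Equiv.Perm.sign_swap (Ne.symm hqp)]
        push_cast
        ring
      have hupd : Function.update (⇑(σ * Equiv.swap p q)) q x = Function.update (⇑σ) p x := by
        funext r
        by_cases hr : r = q
        · subst hr
          rw [Function.update_self, Function.update_of_ne hqp, hqx]
        · by_cases hr' : r = p
          · subst hr'
            rw [Function.update_of_ne (Ne.symm hqp), Function.update_self,
              Equiv.Perm.mul_apply, Equiv.swap_apply_left, hqx]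
          · rw [Function.update_of_ne hr, Function.update_of_ne hr',
              Equiv.Perm.mul_apply, Equiv.swap_apply_of_ne_of_ne hr' hr]
      simp only [if_pos hpy, if_pos h1, hsgn, hupd, neg_smul]
      exact add_neg_cancel _
    · have h1 : (σ * Equiv.swap p q) q ≠ y := by
        simpa [Equiv.Perm.mul_apply, Equiv.swap_apply_right] using hpy
      simp [if_neg hpy, if_neg h1]
  · rintro ⟨σ, p⟩ hf hg
    apply hf
    have hp : σ⁻¹ x = p := congrArg Prod.snd hg
    have hx : σ p = x := by rw [← hp]; exact σ.apply_symm_apply x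
    rw [if_neg (fun h : σ p = y => hxy (hx ▸ h))]
    exact smul_zero _
  · intro _; exact Finset.mem_univ _
  · rintro ⟨σ, p⟩
    set q := σ⁻¹ x with hq
    have hx : (σ * Equiv.swap p q) p = x := by
      simp [Equiv.Perm.mul_apply, Equiv.swap_apply_left, hq]
    have hinv : (σ * Equiv.swap p q)⁻¹ x = p := by
      rw [← hx]; exact Equiv.symm_apply_apply _ _
    refine Prod.ext ?_ ?_
    · show (σ * Equiv.swap p q) * Equiv.swap q ((σ * Equiv.swap p q)⁻¹ x) = σ
      rw [hinv, Equiv.swap_comm q p, mul_assoc, Equiv.swap_mul_self, mul_one]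
    · exact hinv

end Main3
end Stmt13Aux

namespace Stmt13Aux
section Main4
variable {V : Type*} [AddCommGroup V] [Module ℂ V]
variable (n : ℕ) (Fo : Fin (2*n) → Fin (2*n) → ℤ → Module.End ℂ V) (i j : Fin (2*n))

def Tt (vac : V) (f : Fin (2*n) → Fin (2*n)) (p : Fin (2*n)) : V :=
  (if f p = j then (prodA (Afun n Fo (Function.update f p i)) (List.finRange n)) vac else 0)
  - (if f p = i then (prodA (Afun n Fo (Function.update f p j)) (List.finRange n)) vac else 0)

lemma repl_vac (vac : V) (f : Fin (2*n) → Fin (2*n)) (k : Fin n) :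
    (repl n Fo i j f (List.finRange n) k) vac
      = Tt n Fo i j vac f (ee n k) + Tt n Fo i j vac f (oo n k) := by
  unfold repl Tt
  simp only [LinearMap.sub_apply, LinearMap.add_apply,
    apply_ite (fun (E : Module.End ℂ V) => E vac), LinearMap.zero_apply]
  simp only [eq_comm (a := i), eq_comm (a := j)]
  abel

end Main4
end Stmt13Aux

open Stmt13Aux

/-- In the vacuum module at the critical level `K = -(2n-2)` over the affine
orthogonal Lie algebra `ô_{2n}`, the noncommutative Pfaffian
`Pf F[-1] = (1/(2^n n!)) ∑_σ sgn(σ) F_{σ(1)σ(2)}[-1] ⋯ F_{σ(2n-1)σ(2n)}[-1]`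
applied to the vacuum vector is annihilated by all `F_{ij}[0]`. -/
theorem stmt13 (n : ℕ) (hn : 0 < n) (V : Type*) [AddCommGroup V] [Module ℂ V]
    (Fo : Fin (2*n) → Fin (2*n) → ℤ → Module.End ℂ V) (K : ℂ)
    (hskew : ∀ i j r, Fo j i r = - Fo i j r)
    (hcomm : ∀ i j k l : Fin (2*n), ∀ r s : ℤ,
      Fo i j r * Fo k l s - Fo k l s * Fo i j r =
        (if k = j then Fo i l (r+s) else 0) - (if i = l then Fo k j (r+s) else 0)
        - (if k = i then Fo j l (r+s) else 0) + (if j = l then Fo k i (r+s) else 0)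
        + (if r + s = 0 then
            ((r : ℂ) * (((if k = j ∧ i = l then 1 else 0)
              - (if k = i ∧ j = l then (1:ℂ) else 0)) * K)) • 1 else 0))
    (hK : K = -(2*(n:ℂ) - 2))
    (vac : V) (hvac : ∀ i j : Fin (2*n), ∀ r : ℤ, 0 ≤ r → Fo i j r vac = 0)
    (i j : Fin (2*n)) :
    Fo i j 0 (((2^n * n.factorial : ℂ))⁻¹ •
      ∑ σ : Equiv.Perm (Fin (2*n)),
        ((Equiv.Perm.sign σ : ℤ) : ℂ) •
          (((List.finRange n).map fun (k : Fin n) =>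
            Fo (σ ⟨2*(k:ℕ), by have := k.isLt; omega⟩)
               (σ ⟨2*(k:ℕ)+1, by have := k.isLt; omega⟩) (-1)).prod) vac) = 0 := by
  by_cases hij : i = j
  · subst hij
    have h0 : Fo i i 0 = 0 := by
      have h2 : (2:ℂ) • Fo i i 0 = 0 := by
        rw [two_smul]; nth_rewrite 1 [hskew i i 0]; exact neg_add_cancel _
      simpa [smul_eq_zero] using h2
    rw [h0]
    exact LinearMap.zero_apply _
  · show Fo i j 0 (((2^n * n.factorial : ℂ))⁻¹ •
      ∑ σ : Equiv.Perm (Fin (2*n)),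
        ((Equiv.Perm.sign σ : ℤ) : ℂ) •
          (prodA (Afun n Fo ⇑σ) (List.finRange n)) vac) = 0
    have hvac0 : Fo i j 0 vac = 0 := hvac i j 0 le_rfl
    have key : Fo i j 0 (∑ σ : Equiv.Perm (Fin (2*n)),
        ((Equiv.Perm.sign σ : ℤ) : ℂ) • (prodA (Afun n Fo ⇑σ) (List.finRange n)) vac) = 0 := by
      rw [map_sum]
      simp only [map_smul]
      have step1 : ∀ σ : Equiv.Perm (Fin (2*n)),
          Fo i j 0 ((prodA (Afun n Fo ⇑σ) (List.finRange n)) vac)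
            = ∑ p : Fin (2*n), Tt n Fo i j vac ⇑σ p := by
        intro σ
        rw [Xpr n Fo i j K hcomm vac hvac0 ⇑σ]
        rw [Finset.sum_congr rfl fun k _ => repl_vac n Fo i j vac ⇑σ k]
        exact (sum_eo n _).symm
      simp only [step1]
      simp only [Finset.smul_sum]
      simp only [Tt, smul_sub]
      simp only [Finset.sum_sub_distrib]
      rw [cancel n Fo vac i j hij, cancel n Fo vac j i (Ne.symm hij), sub_zero]
    rw [map_smul, key, smul_zero]
end
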